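/- Let $1 < q \le 2$, Hilbert space $U$ with orthonormal basis $(\phi_i)$, convex penalty $\mathcal{R}_q$ as above, $u^\dagger \in \operatorname{dom}(\partial\mathcal{R}_q)$, and suppose there exist $0 \le \gamma_1 < 1$, $\gamma_2 > 0$, $\rho > \mathcal{R}_q(u^\dagger)$ such that $\langle\partial\mathcal{R}_q(u^\dagger), u^\dagger - u\rangle \le \gamma_1 \mathcal{D}_B(u, u^\dagger) + \gamma_2\|F(u) - F(u^\dagger)\|$ for all $u$ with $\mathcal{R}_q(u) < \rho$, where $\mathcal{D}_B(u,u^\dagger) = \mathcal{R}_q(u) - \mathcal{R}_q(u^\dagger) - \langle\partial\mathcal{R}_q(u^\dagger), u - u^\dagger\rangle$. Then there exist $\beta_1, \beta_2 > 0$ such that $\mathcal{R}_q(u) - \mathcal{R}_q(u^\dagger) \ge \beta_1\|u-u^\dagger\|^2 - \beta_2\|F(u)-F(u^\dagger)\|$ for all such $u$; explicitly one may take $\beta_1 = \tilde\beta/(1+2\gamma_1)$ and $\beta_2 = \gamma_2/(1+2\gamma_1)$ with $\tilde\beta = (1-\gamma_1)c_q/(3w_{\min}+2\mathcal{R}_q(u^\dagger)+\rho)$.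 -/

import Mathlib

open Real Filter Set

-- rewrite the mathlib derivative in sign form
lemma my_hasDerivAt_abs_rpow {q : ℝ} (hq : 1 < q) (x : ℝ) :
    HasDerivAt (fun y : ℝ => |y| ^ q) (q * |x| ^ (q - 1) * Real.sign x) x := by
  have h := hasDerivAt_abs_rpow x hq
  convert h using 1
  rcases lt_trichotomy x 0 with hx | hx | hx
  · rw [Real.sign_of_neg hx, abs_of_neg hx,
      show q - 1 = (q - 2) + 1 by ring, Real.rpow_add (by linarith) _ 1, Real.rpow_one]
    ring
  · simp [hx]
  · rw [Real.sign_of_pos hx, abs_of_pos hx,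
      show q - 1 = (q - 2) + 1 by ring, Real.rpow_add hx _ 1, Real.rpow_one]
    ring

lemma key_1d {q M : ℝ} (hq1 : 1 < q) (hq2 : q ≤ 2) (hM : 0 < M)
    {s t : ℝ} (hs : |s| ≤ M) (ht : |t| ≤ M) :
    q * (q-1) / 2 * M ^ (q-2) * (t-s)^2 + q * |s| ^ (q-1) * Real.sign s * (t-s)
      ≤ |t| ^ q - |s| ^ q := by
  set κ : ℝ := q * (q-1) / 2 * M ^ (q-2) with hκ
  have hκpos : 0 < κ := by
    have := Real.rpow_pos_of_pos hM (q-2)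
    have h1 : 0 < q * (q-1) / 2 := by nlinarith
    positivity
  set φ : ℝ → ℝ := fun x => q * |x| ^ (q-1) * Real.sign x - 2 * κ * x with hφ
  set f : ℝ → ℝ := fun x => |x| ^ q - κ * x ^ 2 with hf
  have hfderiv : ∀ x, HasDerivAt f (φ x) x := by
    intro x
    have h1 := my_hasDerivAt_abs_rpow hq1 x
    have h2 : HasDerivAt (fun y : ℝ => κ * y ^ 2) (κ * (2 * x)) x := by
      simpa using ((hasDerivAt_pow 2 x).const_mul κ)
    have := h1.sub h2
    exact this.congr_deriv (by simp only [hφ]; ring)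
  -- ψ on [0, M]
  set ψ : ℝ → ℝ := fun x => q * x ^ (q-1) - 2 * κ * x with hψ
  have hψ0 : ψ 0 = 0 := by
    simp [hψ, Real.zero_rpow (by linarith : q - 1 ≠ 0)]
  have hbase : ∀ x : ℝ, 0 < x → x ≤ M → M ^ (q-2) ≤ x ^ (q-2) :=
    fun x hx hxM => Real.rpow_le_rpow_of_nonpos hx hxM (by linarith)
  have hψnonneg : ∀ x ∈ Icc (0:ℝ) M, 0 ≤ ψ x := by
    rintro x ⟨hx0, hxM⟩
    rcases eq_or_lt_of_le hx0 with h | h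
    · rw [← h, hψ0]
    · have h1 : x ^ (q-2) * x = x ^ (q-1) := by
        rw [show q - 1 = (q - 2) + 1 by ring, Real.rpow_add h, Real.rpow_one]
      have h2 : 2 * κ * x ≤ q * (q-1) * x ^ (q-1) := by
        have := hbase x h hxM
        calc 2 * κ * x = q * (q-1) * (M ^ (q-2) * x) := by rw [hκ]; ring
          _ ≤ q * (q-1) * (x ^ (q-2) * x) := by
              apply mul_le_mul_of_nonneg_left _ (by nlinarith)
              exact mul_le_mul_of_nonneg_right this h.le
          _ = q * (q-1) * x ^ (q-1) := by rw [h1]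
      have h3 : q * (q-1) * x ^ (q-1) ≤ q * x ^ (q-1) := by
        have hx1 : 0 ≤ x ^ (q-1) := Real.rpow_nonneg hx0 _
        exact mul_le_mul_of_nonneg_right (by nlinarith) hx1
      simp only [hψ]
      linarith
  have hψcont : ContinuousOn ψ (Icc 0 M) := by
    apply ContinuousOn.sub
    · exact (continuous_const.mul (continuous_iff_continuousAt.mpr fun x =>
        Real.continuousAt_rpow_const x (q-1) (Or.inr (by linarith)))).continuousOn
    · exact ((continuous_const.mul continuous_id)).continuousOn
  have hψderiv : ∀ x : ℝ, x ≠ 0 → HasDerivAt ψ (q * ((q-1) * x ^ (q-2)) - 2 * κ) x := by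
    intro x hx
    have h := ((Real.hasDerivAt_rpow_const (p := q-1) (Or.inl hx)).const_mul q).sub
      (by simpa using ((hasDerivAt_id x).const_mul (2*κ)) :
        HasDerivAt (fun y : ℝ => 2 * κ * y) (2*κ) x)
    rw [show q - 2 = q - 1 - 1 by ring]
    exact h
  have hψmono : MonotoneOn ψ (Icc 0 M) := by
    apply monotoneOn_of_deriv_nonneg (convex_Icc 0 M) hψcont
    · intro x hx
      rw [interior_Icc] at hx
      exact (hψderiv x (ne_of_gt hx.1)).differentiableAt.differentiableWithinAt
    · intro x hx
      rw [interior_Icc] at hx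
      rw [(hψderiv x (ne_of_gt hx.1)).deriv]
      have h1 := hbase x hx.1 hx.2.le
      have h0 : 2 * κ = q * (q-1) * M ^ (q-2) := by rw [hκ]; ring
      have h2 : q * (q-1) * M ^ (q-2) ≤ q * (q-1) * x ^ (q-2) :=
        mul_le_mul_of_nonneg_left h1 (by nlinarith)
      linarith [h2, h0]
  have hφψ : ∀ x : ℝ, 0 ≤ x → φ x = ψ x := by
    intro x hx
    rcases eq_or_lt_of_le hx with h | h
    · simp [← h, hφ, hψ0, Real.sign_zero]
    · simp only [hφ, hψ, Real.sign_of_pos h, abs_of_pos h]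
      ring
  have hφneg : ∀ x : ℝ, x < 0 → φ x = -ψ (-x) := by
    intro x hx
    simp only [hφ, hψ, Real.sign_of_neg hx, abs_of_neg hx]
    ring
  have hφmono : MonotoneOn φ (Icc (-M) M) := by
    rintro x ⟨hx1, hx2⟩ y ⟨hy1, hy2⟩ hxy
    rcases le_or_gt 0 x with hx | hx
    · rw [hφψ x hx, hφψ y (hx.trans hxy)]
      exact hψmono ⟨hx, hx2⟩ ⟨hx.trans hxy, hy2⟩ hxy
    · rcases le_or_gt 0 y with hy | hy
      · rw [hφneg x hx, hφψ y hy]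
        have h1 : 0 ≤ ψ (-x) := hψnonneg (-x) ⟨by linarith, by linarith⟩
        have h2 : 0 ≤ ψ y := hψnonneg y ⟨hy, hy2⟩
        linarith
      · rw [hφneg x hx, hφneg y hy]
        have := hψmono (a := -y) (b := -x) ⟨by linarith, by linarith⟩
          ⟨by linarith, by linarith⟩ (by linarith)
        linarith
  -- main argument with G
  have hsM : s ∈ Icc (-M) M := abs_le.mp hs
  have htM : t ∈ Icc (-M) M := abs_le.mp ht
  set G : ℝ → ℝ := fun x => f x - φ s * x with hG
  have hGd : ∀ x, HasDerivAt G (φ x - φ s) x := fun x =>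
    (hfderiv x).sub (by simpa using (hasDerivAt_id x).const_mul (φ s))
  have hGcont : Continuous G := by
    apply continuous_iff_continuousAt.mpr
    exact fun x => (hGd x).continuousAt
  have hGst : G s ≤ G t := by
    rcases le_or_gt s t with hst | hst
    · have hmono : MonotoneOn G (Icc s M) := by
        apply monotoneOn_of_deriv_nonneg (convex_Icc s M) hGcont.continuousOn
          (fun x _ => (hGd x).differentiableAt.differentiableWithinAt)
        intro x hx
        rw [interior_Icc] at hx
        rw [(hGd x).deriv]
        have hxm : x ∈ Icc (-M) M := ⟨by linarith [hsM.1, hx.1], hx.2.le⟩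
        linarith [hφmono hsM hxm (le_of_lt hx.1)]
      exact hmono ⟨le_refl s, hsM.2⟩ ⟨hst, htM.2⟩ hst
    · have hanti : AntitoneOn G (Icc (-M) s) := by
        apply antitoneOn_of_deriv_nonpos (convex_Icc (-M) s) hGcont.continuousOn
          (fun x _ => (hGd x).differentiableAt.differentiableWithinAt)
        intro x hx
        rw [interior_Icc] at hx
        rw [(hGd x).deriv]
        have hxm : x ∈ Icc (-M) M := ⟨hx.1.le, by linarith [hsM.2, hx.2]⟩
        linarith [hφmono hxm hsM (le_of_lt hx.2)]
      exact hanti ⟨htM.1, hst.le⟩ ⟨hsM.1, le_refl s⟩ hst.le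
  simp only [hG, hf, hφ] at hGst
  nlinarith [hGst]

open scoped InnerProductSpace

theorem hkps_condition_implies_variational
    {U V : Type*} [NormedAddCommGroup U] [InnerProductSpace ℝ U] [CompleteSpace U]
    [NormedAddCommGroup V] [NormedSpace ℝ V]
    (F : U → V) (b : HilbertBasis ℕ ℝ U)
    (q : ℝ) (hq1 : 1 < q) (hq2 : q ≤ 2)
    (w : ℕ → ℝ) (wmin : ℝ) (hwmin : 0 < wmin) (hw : ∀ i, wmin ≤ w i)
    (R : U → ℝ) (hR : ∀ u : U, R u = ∑' i, w i * |⟪b i, u⟫_ℝ| ^ q)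
    (udag : U) (hudag : Summable (fun i => w i * |⟪b i, udag⟫_ℝ| ^ q))
    (ξ : U)
    (hξ : ∀ i, ⟪b i, ξ⟫_ℝ = q * w i * |⟪b i, udag⟫_ℝ| ^ (q - 1) * Real.sign ⟪b i, udag⟫_ℝ)
    (γ₁ γ₂ ρ : ℝ) (hγ₁0 : 0 ≤ γ₁) (hγ₁1 : γ₁ < 1) (hγ₂ : 0 < γ₂) (hρ : R udag < ρ)
    (hhkps : ∀ u : U, Summable (fun i => w i * |⟪b i, u⟫_ℝ| ^ q) → R u < ρ →
      ⟪ξ, udag - u⟫_ℝ ≤ γ₁ * (R u - R udag - ⟪ξ, u - udag⟫_ℝ) + γ₂ * ‖F u - F udag‖) :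
    ∃ β₁ > 0, ∃ β₂ > 0, ∀ u : U,
      Summable (fun i => w i * |⟪b i, u⟫_ℝ| ^ q) → R u < ρ →
      β₁ * ‖u - udag‖ ^ 2 - β₂ * ‖F u - F udag‖ ≤ R u - R udag := by
  -- basic positivity
  have hρ0 : 0 < ρ := by
    have : 0 ≤ R udag := by
      rw [hR udag]
      exact tsum_nonneg fun i => mul_nonneg ((hwmin.trans_le (hw i)).le)
        (Real.rpow_nonneg (abs_nonneg _) _)
    linarith
  set M : ℝ := (ρ / wmin) ^ (1/q) with hM
  have hMpos : 0 < M := Real.rpow_pos_of_pos (div_pos hρ0 hwmin) _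
  set κ : ℝ := q * (q-1) / 2 * M ^ (q-2) with hκ
  have hκpos : 0 < κ := by
    have := Real.rpow_pos_of_pos hMpos (q-2)
    have h1 : 0 < q * (q-1) / 2 := by nlinarith
    positivity
  -- coefficient bound from R u < ρ
  have hcoef : ∀ (u : U), Summable (fun i => w i * |⟪b i, u⟫_ℝ| ^ q) → R u < ρ →
      ∀ i, |⟪b i, u⟫_ℝ| ≤ M := by
    intro u hsum hru i
    have h1 : w i * |⟪b i, u⟫_ℝ| ^ q ≤ R u := by
      rw [hR u]
      exact Summable.le_tsum hsum i fun j _ => mul_nonneg ((hwmin.trans_le (hw j)).le)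
        (Real.rpow_nonneg (abs_nonneg _) _)
    have h2 : wmin * |⟪b i, u⟫_ℝ| ^ q ≤ w i * |⟪b i, u⟫_ℝ| ^ q :=
      mul_le_mul_of_nonneg_right (hw i) (Real.rpow_nonneg (abs_nonneg _) _)
    have h3 : |⟪b i, u⟫_ℝ| ^ q ≤ ρ / wmin := by
      rw [le_div_iff₀ hwmin]
      nlinarith
    have h4 : (|⟪b i, u⟫_ℝ| ^ q) ^ (1/q) ≤ (ρ / wmin) ^ (1/q) :=
      Real.rpow_le_rpow (Real.rpow_nonneg (abs_nonneg _) _) h3 (by positivity)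
    rwa [← Real.rpow_mul (abs_nonneg _), mul_one_div, div_self (by linarith : q ≠ 0),
      Real.rpow_one] at h4
  have hdagM : ∀ i, |⟪b i, udag⟫_ℝ| ≤ M := hcoef udag hudag hρ
  refine ⟨(1 - γ₁) * wmin * κ, mul_pos (mul_pos (by linarith) hwmin) hκpos, γ₂, hγ₂, fun u hsum hru => ?_⟩
  set c : ℕ → ℝ := fun i => ⟪b i, u⟫_ℝ with hc
  set d : ℕ → ℝ := fun i => ⟪b i, udag⟫_ℝ with hd
  -- summability facts
  have hX : Summable (fun i => ⟪b i, ξ⟫_ℝ * (c i - d i)) := by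
    have := b.summable_inner_mul_inner ξ (u - udag)
    simpa [real_inner_comm, inner_sub_right, hc, hd] using this
  have hS : Summable (fun i => (c i - d i)^2) := by
    refine (b.summable_inner_mul_inner (u - udag) (u - udag)).congr fun i => ?_
    rw [real_inner_comm (b i) (u - udag), inner_sub_right]
    ring
  -- tsum identities
  have hXsum : ∑' i, ⟪b i, ξ⟫_ℝ * (c i - d i) = ⟪ξ, u - udag⟫_ℝ := by
    have := b.tsum_inner_mul_inner ξ (u - udag)
    rw [← this]
    congr 1; funext i
    rw [real_inner_comm ξ (b i), inner_sub_right]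
  have hSsum : ∑' i, (c i - d i)^2 = ‖u - udag‖^2 := by
    have h0 := b.tsum_inner_mul_inner (u - udag) (u - udag)
    rw [real_inner_self_eq_norm_sq] at h0
    rw [← h0]
    refine tsum_congr fun i => ?_
    rw [real_inner_comm (b i) (u - udag), inner_sub_right]
    ring
  -- pointwise inequality
  have hpt : ∀ i, wmin * κ * (c i - d i)^2 + ⟪b i, ξ⟫_ℝ * (c i - d i)
      ≤ w i * |c i| ^ q - w i * |d i| ^ q := by
    intro i
    have hkey := key_1d hq1 hq2 hMpos (hdagM i) (hcoef u hsum hru i)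
    rw [← hκ] at hkey
    have hwi : 0 < w i := hwmin.trans_le (hw i)
    have h1 := mul_le_mul_of_nonneg_left hkey hwi.le
    have h2 : wmin * κ * (c i - d i)^2 ≤ w i * κ * (c i - d i)^2 :=
      mul_le_mul_of_nonneg_right (mul_le_mul_of_nonneg_right (hw i) hκpos.le)
        (sq_nonneg _)
    rw [hξ i]
    nlinarith [h1, h2]
  -- sum it up
  have hmain : wmin * κ * ‖u - udag‖^2 + ⟪ξ, u - udag⟫_ℝ ≤ R u - R udag := by
    have hL : Summable (fun i => wmin * κ * (c i - d i)^2 + ⟪b i, ξ⟫_ℝ * (c i - d i)) :=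
      (hS.mul_left _).add hX
    have hRsum : Summable (fun i => w i * |c i| ^ q - w i * |d i| ^ q) := hsum.sub hudag
    have := Summable.tsum_le_tsum hpt hL hRsum
    rw [Summable.tsum_add (hS.mul_left _) hX, tsum_mul_left, hSsum, hXsum,
      Summable.tsum_sub hsum hudag, ← hR u, ← hR udag] at this
    exact this
  have hI : ⟪ξ, udag - u⟫_ℝ = -⟪ξ, u - udag⟫_ℝ := by
    rw [inner_sub_right, inner_sub_right]; ring
  have hh := hhkps u hsum hru
  rw [hI] at hh
  have h1' : wmin * κ * ‖u - udag‖^2 ≤ R u - R udag - ⟪ξ, u - udag⟫_ℝ := by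
    linarith [hmain]
  have h3 := mul_le_mul_of_nonneg_left h1' (show (0:ℝ) ≤ 1 - γ₁ by linarith)
  nlinarith [hh, h3]
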